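/- arXiv:1803.05461 — 5 statements merged into one kernel-verified Lean document; each statement's English description precedes it below -/
import Mathlib

section
/- Let Γ be a countable group acting in a Borel way on a standard Borel space X. For every Borel graph G on X of bounded vertex degree (i.e., every vertex has degree at most some fixed d), there exists an integer m > 0 and a Borel coloring ψ : X → Fin 2^m (equivalently ψ : X → {0,1}^m) such that ψ(p) ≠ ψ(q) whenever p and q are adjacent in G. -/
set_option maxHeartbeats 1000000

open Set

private lemma measComp {X V W : Type*} [MeasurableSpace X] [MeasurableSpace W] [Countable V]
    (h : X → V) (hh : ∀ v, MeasurableSet {x | h x = v}) (f : V → W) :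
    Measurable fun x => f (h x) := by
  intro S _
  have : (fun x => f (h x)) ⁻¹' S = ⋃ v ∈ {v | f v ∈ S}, {x | h x = v} := by
    ext x; simp
  rw [this]
  exact MeasurableSet.biUnion (Set.to_countable _) fun v _ => hh v


private lemma greedyStep {X : Type} [MeasurableSpace X] (d : ℕ) (g : Fin d → X → X)
    (gate : Fin d → Set X) (hg : ∀ i, Measurable (g i)) (hgate : ∀ i, MeasurableSet (gate i)) :
    ∃ step : (X → Fin (d + 1)) → X → Fin (d + 1),
      (∀ ξ, Measurable ξ → Measurable (step ξ)) ∧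
      (∀ ξ ξ' p, (∀ i, p ∈ gate i → ξ (g i p) = ξ' (g i p)) → step ξ p = step ξ' p) ∧
      (∀ ξ p i, p ∈ gate i → step ξ p ≠ ξ (g i p)) := by
  classical
  set forb : (Fin d → Option (Fin (d + 1))) → Finset (Fin (d + 1)) :=
    fun w => Finset.univ.biUnion fun i => (w i).toFinset with hforbdef
  have hforb : ∀ w, (Finset.univ \ forb w).Nonempty := by
    intro w
    rw [← Finset.card_pos, Finset.card_sdiff_of_subset (Finset.subset_univ _)]
    have h1 : (forb w).card ≤ d := by
      refine le_trans Finset.card_biUnion_le ?_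
      calc ∑ i : Fin d, (w i).toFinset.card ≤ ∑ _i : Fin d, 1 :=
            Finset.sum_le_sum fun i _ => by cases w i <;> simp
        _ = d := by simp
    have h2 : (Finset.univ : Finset (Fin (d + 1))).card = d + 1 := by simp
    omega
  set f : (Fin d → Option (Fin (d + 1))) → Fin (d + 1) :=
    fun w => (Finset.univ \ forb w).min' (hforb w) with hfdef
  have hf : ∀ w i k, w i = some k → f w ≠ k := by
    intro w i k hk hfk
    have hmem := Finset.min'_mem (Finset.univ \ forb w) (hforb w)
    rw [Finset.mem_sdiff] at hmem
    refine hmem.2 (Finset.mem_biUnion.2 ⟨i, Finset.mem_univ i, ?_⟩)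
    rw [Option.mem_toFinset, hk, ← hfk]
    rfl
  set wv : (X → Fin (d + 1)) → X → (Fin d → Option (Fin (d + 1))) :=
    fun ξ p i => if p ∈ gate i then some (ξ (g i p)) else none with hwvdef
  refine ⟨fun ξ p => f (wv ξ p), ?_, ?_, ?_⟩
  · intro ξ hξ
    refine measComp (wv ξ) ?_ f
    intro v
    have hsplit : {x | wv ξ x = v} = ⋂ i, {x | wv ξ x i = v i} := by
      ext x; simp [funext_iff]
    rw [hsplit]
    refine MeasurableSet.iInter fun i => ?_
    rcases hvi : v i with _ | k
    · have : {x | wv ξ x i = none} = (gate i)ᶜ := by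
        ext x; by_cases hx : x ∈ gate i <;> simp [hwvdef, hx]
      rw [this]
      exact (hgate i).compl
    · have : {x | wv ξ x i = some k} = gate i ∩ (fun x => ξ (g i x)) ⁻¹' {k} := by
        ext x; by_cases hx : x ∈ gate i <;> simp [hwvdef, hx]
      rw [this]
      exact (hgate i).inter ((hξ.comp (hg i)) (measurableSet_singleton k))
  · intro ξ ξ' p h
    have : wv ξ p = wv ξ' p := by
      funext i
      by_cases hi : p ∈ gate i
      · simp [hwvdef, hi, h i hi]
      · simp [hwvdef, hi]
    show f (wv ξ p) = f (wv ξ' p)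
    rw [this]
  · intro ξ p i hi
    refine hf (wv ξ p) i (ξ (g i p)) ?_
    simp [hwvdef, hi]


private theorem lnDecomp (d : ℕ) :
    ∀ (X Y : Type) [MeasurableSpace X] [StandardBorelSpace X] [MeasurableSpace Y]
      [StandardBorelSpace Y] [Nonempty Y] (R : Set (X × Y)),
      MeasurableSet R → (∀ x, {y | (x, y) ∈ R}.Finite) →
      (∀ x, {y | (x, y) ∈ R}.ncard ≤ d) →
      ∃ (D : Fin d → Set X) (g : Fin d → X → Y),
        (∀ i, MeasurableSet (D i)) ∧ (∀ i, Measurable (g i)) ∧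
        (∀ x y, (x, y) ∈ R ↔ ∃ i, x ∈ D i ∧ g i x = y) := by
  induction d with
  | zero =>
    intro X Y _ _ _ _ _ R _ hfin hcard
    refine ⟨Fin.elim0, Fin.elim0, fun i => i.elim0, fun i => i.elim0, fun x y => ?_⟩
    constructor
    · intro hxy
      have : {y | (x, y) ∈ R} = ∅ :=
        (Set.ncard_eq_zero (hfin x)).1 (Nat.le_zero.mp (hcard x))
      exact absurd hxy (by simpa using (Set.eq_empty_iff_forall_notMem.1 this y))
    · rintro ⟨i, -⟩; exact i.elim0
  | succ d ih =>
    intro X Y _ _ _ _ _ R hR hfin hcard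
    classical
    obtain ⟨e, he⟩ := MeasureTheory.exists_measurableEmbedding_real Y
    -- the set of pairs (z, y') where y' is a "smaller" element of the same section as z
    set T : Set ((X × Y) × Y) :=
      {z | z.1 ∈ R ∧ (z.1.1, z.2) ∈ R ∧ e z.2 < e z.1.2} with hTdef
    have hTmeas : MeasurableSet T := by
      refine (hR.preimage measurable_fst).inter
        ((hR.preimage ((measurable_fst.comp measurable_fst).prodMk measurable_snd)).inter ?_)
      exact measurableSet_lt (he.measurable.comp measurable_snd)
        (he.measurable.comp (measurable_snd.comp measurable_fst))
    have hTsub : ∀ z : X × Y, {y' | (z, y') ∈ T} ⊆ {y | (z.1, y) ∈ R} := by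
      rintro z y' ⟨-, h1, -⟩; exact h1
    have hTfin : ∀ z : X × Y, {y' | (z, y') ∈ T}.Finite :=
      fun z => (hfin z.1).subset (hTsub z)
    have hTcard : ∀ z : X × Y, {y' | (z, y') ∈ T}.ncard ≤ d := by
      intro z
      by_cases hz : z ∈ R
      · have hsub : {y' | (z, y') ∈ T} ⊆ {y | (z.1, y) ∈ R} \ {z.2} := by
          rintro y' ⟨-, h1, h2⟩
          exact ⟨h1, fun hy => by rw [Set.mem_singleton_iff] at hy; rw [hy] at h2; exact lt_irrefl _ h2⟩
        have hz2 : z.2 ∈ {y | (z.1, y) ∈ R} := by simpa using hz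
        have := Set.ncard_le_ncard hsub ((hfin z.1).diff)
        rw [Set.ncard_diff_singleton_of_mem hz2] at this
        have := hcard z.1
        omega
      · have : {y' | (z, y') ∈ T} = ∅ := by
          ext y'; simp only [Set.mem_setOf_eq, Set.mem_empty_iff_false, iff_false]
          rintro ⟨h0, -, -⟩; exact hz h0
        simp [this]
    obtain ⟨DT, gT, hDT, hgT, hTiff⟩ := ih (X × Y) Y T hTmeas hTfin hTcard
    set B : Set (X × Y) := ⋃ i, DT i with hBdef
    have hBmeas : MeasurableSet B := MeasurableSet.iUnion hDT
    have hBiff : ∀ z : X × Y, z ∈ B ↔ ∃ y', (z, y') ∈ T := by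
      intro z
      constructor
      · intro hz
        obtain ⟨i, hi⟩ := Set.mem_iUnion.1 hz
        exact ⟨gT i z, (hTiff z (gT i z)).2 ⟨i, hi, rfl⟩⟩
      · rintro ⟨y', hy'⟩
        obtain ⟨i, hi, -⟩ := (hTiff z y').1 hy'
        exact Set.mem_iUnion.2 ⟨i, hi⟩
    set Rmin : Set (X × Y) := R \ B with hRminDef
    have hRminMeas : MeasurableSet Rmin := hR.diff hBmeas
    -- uniqueness of minima
    have key1 : ∀ x (y y' : Y), (x, y) ∈ Rmin → (x, y') ∈ Rmin → y = y' := by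
      intro x y y' hy hy'
      have h1 : ¬ e y' < e y := fun hlt => hy.2 ((hBiff (x, y)).2 ⟨y', hy.1, hy'.1, hlt⟩)
      have h2 : ¬ e y < e y' := fun hlt => hy'.2 ((hBiff (x, y')).2 ⟨y, hy'.1, hy.1, hlt⟩)
      exact he.injective (le_antisymm (not_lt.1 h1) (not_lt.1 h2))
    -- existence of minima
    have key2 : ∀ x y, (x, y) ∈ R → ∃ y₀, (x, y₀) ∈ Rmin := by
      intro x y hxy
      obtain ⟨y₀, hy₀, hmin⟩ := Set.exists_min_image {y | (x, y) ∈ R} e (hfin x) ⟨y, hxy⟩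
      refine ⟨y₀, hy₀, fun hB => ?_⟩
      obtain ⟨y', hy'⟩ := (hBiff (x, y₀)).1 hB
      exact absurd hy'.2.2 (not_lt.2 (hmin y' hy'.2.1))
    set D₀ : Set X := Prod.fst '' Rmin with hD₀def
    have hmemD₀ : ∀ x, x ∈ D₀ ↔ ∃ y, (x, y) ∈ Rmin := by
      intro x; simp only [hD₀def, Set.mem_image, Prod.exists]
      constructor
      · rintro ⟨a, b, hab, rfl⟩; exact ⟨b, hab⟩
      · rintro ⟨y, hy⟩; exact ⟨x, y, hy, rfl⟩
    have hinj : Set.InjOn Prod.fst Rmin := by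
      rintro ⟨x, y⟩ hz ⟨x', y'⟩ hz' (h : x = x')
      subst h
      exact Prod.ext rfl (key1 x y y' hz hz')
    have hD₀meas : MeasurableSet D₀ :=
      hRminMeas.image_of_measurable_injOn measurable_fst hinj
    set g₀ : X → Y := fun x => if h : ∃ y, (x, y) ∈ Rmin then h.choose else Classical.arbitrary Y
      with hg₀def
    have hg₀graph : ∀ x y, (x, y) ∈ Rmin ↔ x ∈ D₀ ∧ g₀ x = y := by
      intro x y
      constructor
      · intro hxy
        have hex : ∃ y, (x, y) ∈ Rmin := ⟨y, hxy⟩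
        refine ⟨(hmemD₀ x).2 hex, ?_⟩
        simp only [hg₀def, dif_pos hex]
        exact key1 x hex.choose y hex.choose_spec hxy
      · rintro ⟨hx, rfl⟩
        have hex : ∃ y, (x, y) ∈ Rmin := (hmemD₀ x).1 hx
        simp only [hg₀def, dif_pos hex]
        exact hex.choose_spec
    have hg₀meas : Measurable g₀ := by
      intro A hA
      have heq : g₀ ⁻¹' A =
          (Prod.fst '' (Rmin ∩ (Set.univ ×ˢ A))) ∪ (D₀ᶜ ∩ {x | Classical.arbitrary Y ∈ A}) := by
        ext x
        by_cases hx : ∃ y, (x, y) ∈ Rmin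
        · have hxD : x ∈ D₀ := (hmemD₀ x).2 hx
          simp only [Set.mem_preimage, Set.mem_union, Set.mem_inter_iff, Set.mem_compl_iff,
            Set.mem_setOf_eq, hg₀def, dif_pos hx]
          constructor
          · intro hc
            exact Or.inl ⟨(x, hx.choose), ⟨hx.choose_spec, Set.mem_prod.2 ⟨trivial, hc⟩⟩, rfl⟩
          · rintro (⟨⟨a, b⟩, ⟨hab, hb⟩, rfl⟩ | ⟨hxc, -⟩)
            · have : hx.choose = b := key1 a hx.choose b hx.choose_spec hab
              rw [this]; exact hb.2
            · exact absurd hxD hxc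
        · have hxD : x ∉ D₀ := fun hc => hx ((hmemD₀ x).1 hc)
          simp only [Set.mem_preimage, Set.mem_union, Set.mem_inter_iff, Set.mem_compl_iff,
            Set.mem_setOf_eq, hg₀def, dif_neg hx]
          constructor
          · intro hc; exact Or.inr ⟨hxD, hc⟩
          · rintro (⟨⟨a, b⟩, ⟨hab, -⟩, rfl⟩ | ⟨-, hc⟩)
            · exact absurd ((hmemD₀ a).2 ⟨b, hab⟩) hxD
            · exact hc
      rw [heq]
      refine MeasurableSet.union ?_ (hD₀meas.compl.inter (MeasurableSet.const _))
      exact (hRminMeas.inter (MeasurableSet.univ.prod hA)).image_of_measurable_injOn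
        measurable_fst (hinj.mono Set.inter_subset_left)
    -- the rest of the relation
    set Rrest : Set (X × Y) := R ∩ B with hRrestDef
    have hRrestMeas : MeasurableSet Rrest := hR.inter hBmeas
    have hRrestFin : ∀ x, {y | (x, y) ∈ Rrest}.Finite :=
      fun x => (hfin x).subset (fun y hy => hy.1)
    have hRrestCard : ∀ x, {y | (x, y) ∈ Rrest}.ncard ≤ d := by
      intro x
      by_cases hx : ∃ y, (x, y) ∈ R
      · obtain ⟨y, hy⟩ := hx
        obtain ⟨y₀, hy₀⟩ := key2 x y hy
        have hsub : {y | (x, y) ∈ Rrest} ⊆ {y | (x, y) ∈ R} \ {y₀} := by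
          rintro y' ⟨h1, h2⟩
          refine ⟨h1, fun hc => ?_⟩
          rw [Set.mem_singleton_iff] at hc; subst hc
          exact hy₀.2 h2
        have hy₀R : y₀ ∈ {y | (x, y) ∈ R} := hy₀.1
        have := Set.ncard_le_ncard hsub ((hfin x).diff)
        rw [Set.ncard_diff_singleton_of_mem hy₀R] at this
        have := hcard x
        omega
      · have : {y | (x, y) ∈ Rrest} = ∅ := by
          ext y'; simp only [Set.mem_setOf_eq, Set.mem_empty_iff_false, iff_false]
          exact fun hc => hx ⟨y', hc.1⟩
        simp [this]
    obtain ⟨D', g', hD', hg', hiff'⟩ := ih X Y Rrest hRrestMeas hRrestFin hRrestCard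
    refine ⟨Fin.cons D₀ D', Fin.cons g₀ g', ?_, ?_, ?_⟩
    · intro i
      refine Fin.cases ?_ ?_ i
      · simpa using hD₀meas
      · intro j; simpa using hD' j
    · intro i
      refine Fin.cases ?_ ?_ i
      · simpa using hg₀meas
      · intro j; simpa using hg' j
    · intro x y
      have hsplit : (x, y) ∈ R ↔ (x, y) ∈ Rmin ∨ (x, y) ∈ Rrest := by
        constructor
        · intro h
          by_cases hB : (x, y) ∈ B
          · exact Or.inr ⟨h, hB⟩
          · exact Or.inl ⟨h, hB⟩
        · rintro (h | h)
          · exact h.1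
          · exact h.1
      rw [hsplit, hg₀graph x y, hiff' x y, Fin.exists_fin_succ]
      simp only [Fin.cons_zero, Fin.cons_succ]


/-- Kechris–Solecki–Todorcevic for bounded-degree Borel graphs: a Borel graph of
vertex degree at most `d` on a standard Borel space admits a Borel coloring
into `{0,1}^m` for some `m > 0`. -/
theorem stmt0 {X : Type} [MeasurableSpace X] [StandardBorelSpace X]
    (G : X → X → Prop)
    (hsym : ∀ p q, G p q → G q p)
    (hirr : ∀ p, ¬ G p p)
    (hmeas : MeasurableSet {pq : X × X | G pq.1 pq.2})
    (d : ℕ)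
    (hdeg : ∀ p, {q | G p q}.Finite ∧ {q | G p q}.ncard ≤ d) :
    ∃ m : ℕ, 0 < m ∧ ∃ ψ : X → (Fin m → Bool),
      Measurable ψ ∧ ∀ p q, G p q → ψ p ≠ ψ q := by
  classical
  cases isEmpty_or_nonempty X with
  | inl hX =>
    exact ⟨1, one_pos, fun p => isEmptyElim p, measurable_of_empty _, fun p => isEmptyElim p⟩
  | inr hne =>
    obtain ⟨D, g, hD, hg, hGiff⟩ := lnDecomp d X X {pq : X × X | G pq.1 pq.2} hmeas
      (fun p => (hdeg p).1) (fun p => (hdeg p).2)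

    classical
    obtain ⟨e, he⟩ := MeasureTheory.exists_measurableEmbedding_real X
    -- countable separating family
    set A : ℚ × ℚ → Set X := fun ab => e ⁻¹' (Set.Ioo (ab.1 : ℝ) (ab.2 : ℝ)) with hAdef
    have hA : ∀ n, MeasurableSet (A n) := fun n => he.measurable measurableSet_Ioo
    have hApt : ∀ p : X, ∃ n, p ∈ A n := by
      intro p
      obtain ⟨a, ha⟩ := exists_rat_lt (e p)
      obtain ⟨b, hb⟩ := exists_rat_gt (e p)
      exact ⟨(a, b), ha, hb⟩
    have hsep : ∀ p q : X, p ≠ q → ∃ n, p ∈ A n ∧ q ∉ A n := by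
      intro p q hpq
      have hne' : e p ≠ e q := fun h => hpq (he.injective h)
      rcases lt_or_gt_of_ne hne' with hlt | hgt
      · obtain ⟨b, hb1, hb2⟩ := exists_rat_btwn hlt
        obtain ⟨a, ha⟩ := exists_rat_lt (e p)
        exact ⟨(a, b), ⟨ha, hb1⟩, fun hq => absurd hq.2 (not_lt.2 hb2.le)⟩
      · obtain ⟨a, ha1, ha2⟩ := exists_rat_btwn hgt
        obtain ⟨b, hb⟩ := exists_rat_gt (e p)
        exact ⟨(a, b), ⟨ha2, hb⟩, fun hq => absurd hq.1 (not_lt.2 ha1.le)⟩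
    set C : Finset (ℚ × ℚ) → Set X := fun s => ⋂ n ∈ s, A n with hCdef
    have hC : ∀ s, MeasurableSet (C s) :=
      fun s => MeasurableSet.biInter s.countable_toSet (fun n _ => hA n)
    set E : Finset (ℚ × ℚ) → Set X :=
      fun s => C s ∩ ⋂ i : Fin d, {p | p ∈ D i → g i p ∉ C s} with hEdef
    have hEmeas : ∀ s, MeasurableSet (E s) := by
      intro s
      refine (hC s).inter (MeasurableSet.iInter fun i => ?_)
      have : {p | p ∈ D i → g i p ∉ C s} = (D i)ᶜ ∪ (g i) ⁻¹' (C s)ᶜ := by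
        ext p
        simp only [Set.mem_setOf_eq, Set.mem_union, Set.mem_compl_iff, Set.mem_preimage]
        tauto
      rw [this]
      exact (hD i).compl.union ((hg i) (hC s).compl)
    have hGadj : ∀ p (i : Fin d), p ∈ D i → G p (g i p) := by
      intro p i hi
      exact (hGiff p (g i p)).2 ⟨i, hi, rfl⟩
    have hcover : ∀ p, ∃ s, p ∈ E s := by
      intro p
      have hch : ∀ i : Fin d, ∃ n, p ∈ A n ∧ (p ∈ D i → g i p ∉ A n) := by
        intro i
        by_cases hi : p ∈ D i
        · have hne2 : g i p ≠ p := by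
            intro h
            have hG := hGadj p i hi
            rw [h] at hG
            exact hirr p hG
          obtain ⟨n, hn1, hn2⟩ := hsep p (g i p) (Ne.symm hne2)
          exact ⟨n, hn1, fun _ => hn2⟩
        · obtain ⟨n, hn⟩ := hApt p
          exact ⟨n, hn, fun h => absurd h hi⟩
      choose ν hν1 hν2 using hch
      refine ⟨Finset.image ν Finset.univ, ?_, ?_⟩
      · refine Set.mem_biInter fun n hn => ?_
        obtain ⟨i, -, rfl⟩ := Finset.mem_image.1 hn
        exact hν1 i
      · refine Set.mem_iInter.2 fun i => ?_
        intro hi hc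
        have hnC : C (Finset.image ν Finset.univ) ⊆ A (ν i) := by
          intro x hx
          exact Set.mem_iInter₂.mp hx (ν i) (Finset.mem_image.2 ⟨i, Finset.mem_univ i, rfl⟩)
        exact (hν2 i hi) (hnC hc)
    obtain ⟨σ, hσ⟩ := exists_surjective_nat (Finset (ℚ × ℚ))
    set F : ℕ → Set X := fun k => E (σ k) with hFdef
    have hcov' : ∀ p, ∃ k, p ∈ F k := by
      intro p
      obtain ⟨s, hs⟩ := hcover p
      obtain ⟨k, rfl⟩ := hσ s
      exact ⟨k, hs⟩
    set c : X → ℕ := fun p => Nat.find (hcov' p) with hcdef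
    have hcp : ∀ p, p ∈ F (c p) := fun p => Nat.find_spec (hcov' p)
    have hK : ∀ k, MeasurableSet {p | c p = k} := by
      intro k
      have : {p | c p = k} = F k ∩ ⋂ j ∈ Finset.range k, (F j)ᶜ := by
        ext p
        simp only [Set.mem_setOf_eq, hcdef, Nat.find_eq_iff, Set.mem_inter_iff, Set.mem_iInter,
          Finset.mem_range, Set.mem_compl_iff]
      rw [this]
      exact (hEmeas _).inter
        (MeasurableSet.biInter (Finset.range k).countable_toSet fun j _ => (hEmeas _).compl)
    have hcne : ∀ p q, G p q → c p ≠ c q := by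
      intro p q hpq hceq
      have hpE : p ∈ E (σ (c q)) := by rw [← hceq]; exact hcp p
      have hqE : q ∈ E (σ (c q)) := hcp q
      obtain ⟨i, hiD, hig⟩ := (hGiff p q).1 hpq
      have := Set.mem_iInter.1 hpE.2 i hiD
      rw [hig] at this
      exact this hqE.1
    -- greedy coloring
    set gate : Fin d → Set X := fun i => D i ∩ {p | c (g i p) < c p} with hgatedef
    have hgate : ∀ i, MeasurableSet (gate i) := by
      intro i
      refine (hD i).inter ?_
      have : {p | c (g i p) < c p} =
          ⋃ b, ({p | c p = b} ∩ (g i) ⁻¹' (⋃ a ∈ Finset.range b, {q | c q = a})) := by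
        ext p
        simp only [Set.mem_setOf_eq, Set.mem_iUnion, Set.mem_inter_iff, Set.mem_preimage,
          Finset.mem_range]
        constructor
        · intro h; exact ⟨c p, rfl, c (g i p), h, rfl⟩
        · rintro ⟨b, rfl, a, ha, hga⟩; omega
      rw [this]
      exact MeasurableSet.iUnion fun b => (hK b).inter
        ((hg i) (MeasurableSet.biUnion (Finset.range b).countable_toSet fun a _ => hK a))
    obtain ⟨step, hstepMeas, hstepCongr, hstepAvoid⟩ := greedyStep d g gate hg hgate
    set Φ : ℕ → X → Fin (d + 1) := fun n => step^[n + 1] (fun _ => 0) with hΦdef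
    have hΦ0 : Φ 0 = step (fun _ => 0) := by rw [hΦdef]; simp
    have hΦs : ∀ n, Φ (n + 1) = step (Φ n) := by
      intro n
      rw [hΦdef]
      simp only [Function.iterate_succ_apply']
    have hΦmeas : ∀ n, Measurable (Φ n) := by
      intro n
      induction n with
      | zero => rw [hΦ0]; exact hstepMeas _ measurable_const
      | succ n ihn => rw [hΦs]; exact hstepMeas _ ihn
    clear_value Φ
    clear hΦdef
    have hstab : ∀ n p, c p ≤ n → Φ (n + 1) p = Φ n p := by
      intro n
      induction n with
      | zero =>
        intro p hp
        rw [hΦs, hΦ0]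
        refine hstepCongr _ _ p fun i hi => ?_
        have h2 : c (g i p) < c p := hi.2
        exact absurd h2 (by omega)
      | succ n ihn =>
        intro p hp
        rw [hΦs (n + 1), hΦs n]
        refine hstepCongr _ _ p fun i hi => ?_
        have h2 : c (g i p) < c p := hi.2
        have h4 := ihn (g i p) (by omega)
        rw [hΦs n] at h4
        exact h4
    have hstab' : ∀ n p, c p ≤ n → Φ n p = Φ (c p) p := by
      intro n
      induction n with
      | zero => intro p hp; rw [Nat.le_zero.mp hp]
      | succ n ihn =>
        intro p hp
        rcases Nat.lt_or_ge (c p) (n + 1) with h | h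
        · have h' : c p ≤ n := by omega
          rw [hstab n p h']
          exact ihn p h'
        · have : c p = n + 1 := by omega
          rw [this]
    set φ : X → Fin (d + 1) := fun p => Φ (c p) p with hφdef
    have hφK : ∀ k : Fin (d + 1), MeasurableSet {p | φ p = k} := by
      intro k
      have : {p | φ p = k} = ⋃ n, ({p | c p = n} ∩ Φ n ⁻¹' {k}) := by
        ext p
        simp only [Set.mem_setOf_eq, Set.mem_iUnion, Set.mem_inter_iff, Set.mem_preimage,
          Set.mem_singleton_iff]
        constructor
        · intro h; exact ⟨c p, rfl, h⟩
        · rintro ⟨n, hn, hΦn⟩; rw [hφdef]; simp only; rw [hn]; exact hΦn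
      rw [this]
      exact MeasurableSet.iUnion fun n => (hK n).inter ((hΦmeas n) (measurableSet_singleton k))
    have key : ∀ p q, G p q → c q < c p → φ p ≠ φ q := by
      intro p q hpq hlt
      obtain ⟨i, hiD, hig⟩ := (hGiff p q).1 hpq
      have hgatei : p ∈ gate i := ⟨hiD, by simp only [Set.mem_setOf_eq, hig]; exact hlt⟩
      obtain ⟨m, hm⟩ : ∃ m, c p = m + 1 := ⟨c p - 1, by omega⟩
      have h1 : φ p = step (Φ m) p := by rw [hφdef]; simp only; rw [hm, hΦs]
      have h2 : Φ m q = φ q := hstab' m q (by omega)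
      have h3 := hstepAvoid (Φ m) p i hgatei
      rw [hig, h2] at h3
      rw [h1]
      exact h3
    have hφcol : ∀ p q, G p q → φ p ≠ φ q := by
      intro p q hpq
      rcases Nat.lt_trichotomy (c p) (c q) with h | h | h
      · exact (key q p (hsym p q hpq) h).symm
      · exact absurd h (hcne p q hpq)
      · exact key p q hpq h
    refine ⟨d + 1, Nat.succ_pos d, fun p j => decide (φ p = j), ?_, ?_⟩
    · exact measComp φ hφK (fun k j => decide (k = j))
    · intro p q hpq h
      have h1 := congrFun h (φ p)
      simp only [decide_eq_decide] at h1
      exact hφcol p q hpq (h1.mp trivial).symm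
end

section
/- Let Γ be a countably infinite group with a fixed enumeration of generators (σ_i)_{i≥1}, and let α : Γ → X be a Borel action on a standard Borel space. For each n let G_n be the Borel graph on X with edges (p,q), p ≠ q, whenever α(σ_i)(p) = q or α(σ_i)(q) = p for some 1 ≤ i ≤ n. Then there exists a separating, proper C-coloring with respect to α, i.e., a Borel map φ : X → {0,1}^ℕ such that (i) φ is injective, and (ii) for every r > 0 there exists S_r > 0 such that for all p, q ∈ X with 0 < d_{G_r}(p,q) ≤ r, the first S_r coordinates of φ(p) and φ(q) differ. -/
/-- The edge relation of the graph `G_n` generated by the first `n` generators: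
`p ≠ q` and some `σ_i`, `1 ≤ i ≤ n`, maps `p` to `q` or `q` to `p`. -/
def graphEdge {Γ X : Type} [Group Γ] (α : Γ →* Equiv.Perm X) (σ : ℕ → Γ)
    (n : ℕ) (p q : X) : Prop :=
  p ≠ q ∧ ∃ i, 1 ≤ i ∧ i ≤ n ∧ (α (σ i) p = q ∨ α (σ i) q = p)

/-- `d_{G_r}(p,q) ≤ r`: there is a path of length at most `r` from `p` to `q`
in the graph `G_r`. -/
def graphDistLE {Γ X : Type} [Group Γ] (α : Γ →* Equiv.Perm X) (σ : ℕ → Γ)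
    (r : ℕ) (p q : X) : Prop :=
  ∃ k ≤ r, ∃ f : ℕ → X, f 0 = p ∧ f k = q ∧
    ∀ j < k, graphEdge α σ r (f j) (f (j + 1))

namespace Stmt3Aux

variable {Γ X : Type} [Group Γ] [MeasurableSpace X]

def Slist (σ : ℕ → Γ) (r : ℕ) : List Γ :=
  1 :: (List.range (r + 1)).flatMap (fun i => [σ i, (σ i)⁻¹])

def Wpow (σ : ℕ → Γ) (r : ℕ) : ℕ → List Γ
  | 0 => [1]
  | n + 1 => (Slist σ r).flatMap fun a => (Wpow σ r n).map (a * ·)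

def Wsym (σ : ℕ → Γ) (r : ℕ) : List Γ :=
  Wpow σ r r ++ (Wpow σ r r).map (·⁻¹)

lemma one_mem_Slist (σ : ℕ → Γ) (r : ℕ) : (1 : Γ) ∈ Slist σ r :=
  List.mem_cons_self

lemma mem_Slist_gen {σ : ℕ → Γ} {r i : ℕ} (hi : i ≤ r) : σ i ∈ Slist σ r := by
  simp only [Slist, List.mem_cons, List.mem_flatMap, List.mem_range]
  exact Or.inr ⟨i, by omega, by simp⟩

lemma mem_Slist_inv {σ : ℕ → Γ} {r i : ℕ} (hi : i ≤ r) : (σ i)⁻¹ ∈ Slist σ r := by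
  simp only [Slist, List.mem_cons, List.mem_flatMap, List.mem_range]
  exact Or.inr ⟨i, by omega, by simp⟩

lemma mul_mem_Wpow {σ : ℕ → Γ} {r n : ℕ} {a g : Γ} (ha : a ∈ Slist σ r)
    (hg : g ∈ Wpow σ r n) : a * g ∈ Wpow σ r (n + 1) := by
  simp only [Wpow, List.mem_flatMap, List.mem_map]
  exact ⟨a, ha, g, hg, rfl⟩

lemma Wpow_succ_mem {σ : ℕ → Γ} {r n : ℕ} {g : Γ} (hg : g ∈ Wpow σ r n) :
    g ∈ Wpow σ r (n + 1) := by
  have := mul_mem_Wpow (one_mem_Slist σ r) hg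
  rwa [one_mul] at this

lemma Wpow_mono {σ : ℕ → Γ} {r n m : ℕ} (h : n ≤ m) {g : Γ}
    (hg : g ∈ Wpow σ r n) : g ∈ Wpow σ r m := by
  induction h with
  | refl => exact hg
  | step _ ih => exact Wpow_succ_mem ih

lemma inv_mem_Wsym {σ : ℕ → Γ} {r : ℕ} {g : Γ} (hg : g ∈ Wsym σ r) :
    g⁻¹ ∈ Wsym σ r := by
  rcases List.mem_append.mp hg with h | h
  · exact List.mem_append.mpr (Or.inr (List.mem_map.mpr ⟨g, h, rfl⟩))
  · rcases List.mem_map.mp h with ⟨a, ha, rfl⟩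
    exact List.mem_append.mpr (Or.inl (by simpa using ha))

lemma exists_word (α : Γ →* Equiv.Perm X) (σ : ℕ → Γ) {r : ℕ} {p q : X}
    (h : graphDistLE α σ r p q) : ∃ g ∈ Wsym σ r, α g p = q := by
  obtain ⟨k, hk, f, h0, hkq, he⟩ := h
  suffices H : ∀ j ≤ k, ∃ g ∈ Wpow σ r j, α g p = f j by
    obtain ⟨g, hg, hgp⟩ := H k le_rfl
    exact ⟨g, List.mem_append.mpr (Or.inl (Wpow_mono hk hg)), by rw [hgp, hkq]⟩
  intro j
  induction j with
  | zero =>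
    intro _
    exact ⟨1, by simp [Wpow], by simp [h0]⟩
  | succ j ih =>
    intro hj
    obtain ⟨g, hg, hgp⟩ := ih (Nat.le_of_succ_le hj)
    obtain ⟨hne, i, hi1, hir, hcase⟩ := he j (Nat.lt_of_succ_le hj)
    rcases hcase with hc | hc
    · refine ⟨σ i * g, mul_mem_Wpow (mem_Slist_gen hir) hg, ?_⟩
      rw [map_mul, Equiv.Perm.mul_apply, hgp]
      exact hc
    · refine ⟨(σ i)⁻¹ * g, mul_mem_Wpow (mem_Slist_inv hir) hg, ?_⟩
      rw [map_mul, Equiv.Perm.mul_apply, hgp, ← hc, map_inv]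
      exact Equiv.symm_apply_apply _ _

end Stmt3Aux

namespace Stmt3Aux

set_option linter.unusedSectionVars false

variable {Γ X : Type} [Group Γ] [MeasurableSpace X]

noncomputable def nDiff (α : Γ →* Equiv.Perm X) (ψ : X → ℕ → Bool) (g : Γ) (p : X) : ℕ :=
  sInf {n | ψ p n ≠ ψ (α g p) n}

noncomputable def Nmax (α : Γ →* Equiv.Perm X) (σ : ℕ → Γ) (ψ : X → ℕ → Bool) (r : ℕ)
    (p : X) : ℕ :=
  (Wsym σ r).foldr (fun g m => max (nDiff α ψ g p) m) 0

lemma le_foldr_nDiff (α : Γ →* Equiv.Perm X) (ψ : X → ℕ → Bool) (p : X) :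
    ∀ (l : List Γ) {g : Γ}, g ∈ l →
      nDiff α ψ g p ≤ l.foldr (fun g m => max (nDiff α ψ g p) m) 0 := by
  intro l
  induction l with
  | nil => intro g hg; simp at hg
  | cons a t ih =>
    intro g hg
    rcases List.mem_cons.mp hg with rfl | hg
    · exact le_max_left _ _
    · exact le_trans (ih hg) (le_max_right _ _)

lemma nDiff_le_Nmax (α : Γ →* Equiv.Perm X) (σ : ℕ → Γ) (ψ : X → ℕ → Bool)
    {r : ℕ} {g : Γ} (hg : g ∈ Wsym σ r) (p : X) :
    nDiff α ψ g p ≤ Nmax α σ ψ r p :=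
  le_foldr_nDiff α ψ p _ hg

def pf (ψ : X → ℕ → Bool) (p : X) (m : ℕ) : ℕ :=
  ∑ n ∈ Finset.range m, if ψ p n then 2 ^ n else 0

lemma pf_succ (ψ : X → ℕ → Bool) (p : X) (m : ℕ) :
    pf ψ p (m + 1) = pf ψ p m + (if ψ p m then 2 ^ m else 0) :=
  Finset.sum_range_succ _ _

lemma pf_lt (ψ : X → ℕ → Bool) (p : X) (m : ℕ) : pf ψ p m < 2 ^ m := by
  induction m with
  | zero => simp [pf]
  | succ m ih =>
    have h : (if ψ p m then 2 ^ m else 0) ≤ 2 ^ m := by split_ifs <;> simp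
    rw [pf_succ, pow_succ]
    omega

lemma pf_agree (ψ : X → ℕ → Bool) {p q : X} :
    ∀ m, pf ψ p m = pf ψ q m → ∀ n < m, ψ p n = ψ q n := by
  intro m
  induction m with
  | zero => intro _ n hn; exact absurd hn (Nat.not_lt_zero n)
  | succ m ih =>
    intro h
    have hp := pf_lt ψ p m
    have hq := pf_lt ψ q m
    rw [pf_succ, pf_succ] at h
    have hb : ψ p m = ψ q m := by
      cases hpm : ψ p m <;> cases hqm : ψ q m <;> simp [hpm, hqm] at h ⊢ <;> omega
    have h' : pf ψ p m = pf ψ q m := by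
      rw [hb] at h; omega
    intro n hn
    rcases Nat.lt_succ_iff_lt_or_eq.mp hn with h1 | rfl
    · exact ih h' n h1
    · exact hb

noncomputable def c0 (α : Γ →* Equiv.Perm X) (σ : ℕ → Γ) (ψ : X → ℕ → Bool) (r : ℕ)
    (p : X) : ℕ :=
  Nat.pair (Nmax α σ ψ r p) (pf ψ p (Nmax α σ ψ r p + 1))

lemma c0_ne (α : Γ →* Equiv.Perm X) (σ : ℕ → Γ) {ψ : X → ℕ → Bool}
    (hψ : Function.Injective ψ) {r : ℕ} {g : Γ} {p : X}
    (hg : g ∈ Wsym σ r) (hne : α g p ≠ p) :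
    c0 α σ ψ r p ≠ c0 α σ ψ r (α g p) := by
  intro h
  obtain ⟨hN, hpf⟩ := Nat.pair_eq_pair.mp h
  have hne' : ψ p ≠ ψ (α g p) := fun hh => hne (hψ hh).symm
  obtain ⟨n, hn⟩ := Function.ne_iff.mp hne'
  have hmem : nDiff α ψ g p ∈ {n | ψ p n ≠ ψ (α g p) n} := Nat.sInf_mem ⟨n, hn⟩
  have hle : nDiff α ψ g p ≤ Nmax α σ ψ r p := nDiff_le_Nmax α σ ψ hg p
  rw [← hN] at hpf
  exact hmem (pf_agree ψ _ hpf _ (by omega))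

/-! ### Greedy finitization -/

lemma le_foldr_max : ∀ (l : List ℕ) {x : ℕ}, x ∈ l → x ≤ l.foldr max 0 := by
  intro l
  induction l with
  | nil => intro x hx; simp at hx
  | cons a t ih =>
    intro x hx
    rcases List.mem_cons.mp hx with rfl | hx
    · exact le_max_left _ _
    · exact le_trans (ih hx) (le_max_right _ _)

lemma exists_not_mem (l : List ℕ) : ∃ m, m ∉ l := by
  refine ⟨l.foldr max 0 + 1, fun h => ?_⟩
  have := le_foldr_max l h
  omega

lemma exists_le_not_mem (l : List ℕ) : ∃ m ≤ l.length, m ∉ l := by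
  by_contra h
  push_neg at h
  have hsub : Finset.range (l.length + 1) ⊆ l.toFinset := by
    intro m hm
    rw [List.mem_toFinset]
    exact h m (Nat.lt_succ_iff.mp (Finset.mem_range.mp hm))
  have h1 := Finset.card_le_card hsub
  rw [Finset.card_range] at h1
  have h2 := l.toFinset_card_le
  omega

noncomputable def nbrList (α : Γ →* Equiv.Perm X) (σ : ℕ → Γ) (ψ : X → ℕ → Bool) (r : ℕ)
    (grdy : X → ℕ) (p : X) : List ℕ :=
  ((List.finRange (Wsym σ r).length).filter
      (fun i => decide (c0 α σ ψ r (α ((Wsym σ r).get i) p) < c0 α σ ψ r p))).map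
    (fun i => grdy (α ((Wsym σ r).get i) p))

noncomputable def greedy (α : Γ →* Equiv.Perm X) (σ : ℕ → Γ) (ψ : X → ℕ → Bool) (r : ℕ) :
    ℕ → X → ℕ
  | 0, _ => 0
  | n + 1, p => Nat.find (exists_not_mem (nbrList α σ ψ r (greedy α σ ψ r n) p))

lemma find_congr {l1 l2 : List ℕ} (h : l1 = l2) :
    Nat.find (exists_not_mem l1) = Nat.find (exists_not_mem l2) := by
  subst h; rfl

lemma greedy_stable (α : Γ →* Equiv.Perm X) (σ : ℕ → Γ) (ψ : X → ℕ → Bool)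
    (r : ℕ) : ∀ n p, c0 α σ ψ r p < n →
      greedy α σ ψ r n p = greedy α σ ψ r (c0 α σ ψ r p + 1) p := by
  intro n
  induction n using Nat.strong_induction_on with
  | _ n ih =>
    intro p hp
    obtain ⟨n', rfl⟩ : ∃ n', n = n' + 1 := ⟨n - 1, by omega⟩
    simp only [greedy]
    apply find_congr
    simp only [nbrList]
    apply List.map_congr_left
    intro i hi
    have hci : c0 α σ ψ r (α ((Wsym σ r).get i) p) < c0 α σ ψ r p :=
      of_decide_eq_true (List.mem_filter.mp hi).2
    have h1 := ih n' (by omega) (α ((Wsym σ r).get i) p) (by omega)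
    have h2 := ih (c0 α σ ψ r p) (by omega) (α ((Wsym σ r).get i) p) hci
    rw [h1, h2]

noncomputable def colr (α : Γ →* Equiv.Perm X) (σ : ℕ → Γ) (ψ : X → ℕ → Bool) (r : ℕ)
    (p : X) : ℕ :=
  greedy α σ ψ r (c0 α σ ψ r p + 1) p

lemma colr_le (α : Γ →* Equiv.Perm X) (σ : ℕ → Γ) (ψ : X → ℕ → Bool) (r : ℕ)
    (p : X) : colr α σ ψ r p ≤ (Wsym σ r).length := by
  unfold colr
  simp only [greedy]
  obtain ⟨m0, hm0le, hm0⟩ :=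
    exists_le_not_mem (nbrList α σ ψ r (greedy α σ ψ r (c0 α σ ψ r p)) p)
  refine le_trans (Nat.find_min' _ hm0) (le_trans hm0le ?_)
  unfold nbrList
  rw [List.length_map]
  exact le_trans (List.length_filter_le _ _) (by simp)

lemma colr_ne_of_lt (α : Γ →* Equiv.Perm X) (σ : ℕ → Γ) (ψ : X → ℕ → Bool)
    {r : ℕ} {g : Γ} {p : X} (hg : g ∈ Wsym σ r)
    (hlt : c0 α σ ψ r (α g p) < c0 α σ ψ r p) :
    colr α σ ψ r p ≠ colr α σ ψ r (α g p) := by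
  obtain ⟨i, hi⟩ := List.mem_iff_get.mp hg
  have hmem : greedy α σ ψ r (c0 α σ ψ r p) (α g p) ∈
      nbrList α σ ψ r (greedy α σ ψ r (c0 α σ ψ r p)) p := by
    unfold nbrList
    refine List.mem_map.mpr ⟨i, ?_, by rw [hi]⟩
    exact List.mem_filter.mpr ⟨List.mem_finRange i,
      decide_eq_true (by rw [hi]; exact hlt)⟩
  have hns := Nat.find_spec
    (exists_not_mem (nbrList α σ ψ r (greedy α σ ψ r (c0 α σ ψ r p)) p))
  have hst : greedy α σ ψ r (c0 α σ ψ r p) (α g p) = colr α σ ψ r (α g p) := by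
    unfold colr
    exact greedy_stable α σ ψ r _ _ hlt
  intro h
  rw [hst] at hmem
  rw [← h] at hmem
  have hcp : colr α σ ψ r p = Nat.find
      (exists_not_mem (nbrList α σ ψ r (greedy α σ ψ r (c0 α σ ψ r p)) p)) := by
    unfold colr; simp only [greedy]
  rw [hcp] at hmem
  exact hns hmem

lemma colr_proper (α : Γ →* Equiv.Perm X) (σ : ℕ → Γ) {ψ : X → ℕ → Bool}
    (hψ : Function.Injective ψ) {r : ℕ} {g : Γ} {p : X}
    (hg : g ∈ Wsym σ r) (hne : α g p ≠ p) :
    colr α σ ψ r p ≠ colr α σ ψ r (α g p) := by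
  have hc := c0_ne α σ hψ hg hne
  rcases lt_or_gt_of_ne hc with h | h
  · have hginv := inv_mem_Wsym hg
    have hpq : α g⁻¹ (α g p) = p := by
      rw [map_inv]; exact Equiv.symm_apply_apply _ _
    have h2 := colr_ne_of_lt α σ ψ hginv (p := α g p) (by rw [hpq]; exact h)
    rw [hpq] at h2
    exact h2.symm
  · exact colr_ne_of_lt α σ ψ hg h

end Stmt3Aux

namespace Stmt3Aux

set_option linter.unusedSectionVars false

variable {Γ X : Type} [Group Γ] [MeasurableSpace X]

lemma meas_comp {A B : Type*} [MeasurableSpace A] [Countable A]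
    [MeasurableSingletonClass A] [MeasurableSpace B] (G : A → B) {f : X → A}
    (hf : Measurable f) : Measurable fun p => G (f p) :=
  (measurable_of_countable G).comp hf

lemma meas_diag {v : X → ℕ → ℕ} (hv : ∀ n, Measurable fun p => v p n)
    {u : X → ℕ} (hu : Measurable u) : Measurable fun p => v p (u p) := by
  apply measurable_to_countable'
  intro k
  have hset : (fun p => v p (u p)) ⁻¹' {k} =
      ⋃ n, (u ⁻¹' {n}) ∩ ((fun p => v p n) ⁻¹' {k}) := by
    ext p
    simp only [Set.mem_preimage, Set.mem_singleton_iff, Set.mem_iUnion,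
      Set.mem_inter_iff]
    constructor
    · intro h; exact ⟨u p, rfl, h⟩
    · rintro ⟨n, hn, hk⟩; rw [← hn] at hk; exact hk
  rw [hset]
  exact MeasurableSet.iUnion fun n =>
    (hu (measurableSet_singleton n)).inter ((hv n) (measurableSet_singleton k))

variable {α : Γ →* Equiv.Perm X} {σ : ℕ → Γ} {ψ : X → ℕ → Bool}

lemma meas_D (hψm : Measurable ψ) (hα : ∀ γ, Measurable (α γ)) (g : Γ)
    (n : ℕ) : MeasurableSet {p : X | ψ p n = ψ (α g p) n} := by
  have h1 : Measurable fun p : X => ψ p n := (measurable_pi_apply n).comp hψm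
  have h2 : Measurable fun p : X => ψ (α g p) n :=
    ((measurable_pi_apply n).comp hψm).comp (hα g)
  have hset : {p : X | ψ p n = ψ (α g p) n} =
      ⋃ b : Bool, ((fun p : X => ψ p n) ⁻¹' {b}) ∩
        ((fun p : X => ψ (α g p) n) ⁻¹' {b}) := by
    ext p
    simp only [Set.mem_setOf_eq, Set.mem_iUnion, Set.mem_inter_iff,
      Set.mem_preimage, Set.mem_singleton_iff]
    exact ⟨fun h => ⟨ψ p n, rfl, h.symm⟩, fun ⟨b, hb1, hb2⟩ => hb1.trans hb2.symm⟩
  rw [hset]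
  exact MeasurableSet.iUnion fun b =>
    (h1 (measurableSet_singleton b)).inter (h2 (measurableSet_singleton b))

lemma meas_nDiff (hψm : Measurable ψ) (hα : ∀ γ, Measurable (α γ)) (g : Γ) :
    Measurable (nDiff α ψ g) := by
  apply measurable_to_countable'
  intro k
  cases k with
  | zero =>
    have hset : nDiff α ψ g ⁻¹' {0} =
        {p : X | ψ p 0 = ψ (α g p) 0}ᶜ ∪ ⋂ n, {p : X | ψ p n = ψ (α g p) n} := by
      ext p
      simp only [Set.mem_preimage, Set.mem_singleton_iff, Set.mem_union,
        Set.mem_compl_iff, Set.mem_setOf_eq, Set.mem_iInter]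
      rw [nDiff, Nat.sInf_eq_zero]
      constructor
      · rintro (h | h)
        · exact Or.inl h
        · refine Or.inr fun n => ?_
          by_contra hc
          exact absurd (Set.eq_empty_iff_forall_notMem.mp h n) (by simpa using hc)
      · rintro (h | h)
        · exact Or.inl h
        · exact Or.inr (Set.eq_empty_iff_forall_notMem.mpr (by simpa using h))
    rw [hset]
    exact ((meas_D hψm hα g 0).compl).union
      (MeasurableSet.iInter fun n => meas_D hψm hα g n)
  | succ k =>
    have hset : nDiff α ψ g ⁻¹' {k + 1} =
        {p : X | ψ p (k + 1) = ψ (α g p) (k + 1)}ᶜ ∩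
          ⋂ n, ⋂ (_ : n ≤ k), {p : X | ψ p n = ψ (α g p) n} := by
      ext p
      simp only [Set.mem_preimage, Set.mem_singleton_iff, Set.mem_inter_iff,
        Set.mem_compl_iff, Set.mem_setOf_eq, Set.mem_iInter]
      constructor
      · intro h
        unfold nDiff at h
        have hne : {n | ψ p n ≠ ψ (α g p) n}.Nonempty := by
          by_contra hc
          rw [Set.not_nonempty_iff_eq_empty] at hc
          rw [hc, Nat.sInf_empty] at h
          omega
        have hmem := Nat.sInf_mem hne
        rw [h] at hmem
        refine ⟨hmem, fun n hn => ?_⟩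
        by_contra hc
        have hle := Nat.sInf_le (s := {n | ψ p n ≠ ψ (α g p) n}) hc
        omega
      · rintro ⟨h1, h2⟩
        have hle : sInf {n | ψ p n ≠ ψ (α g p) n} ≤ k + 1 := Nat.sInf_le h1
        have hge : ¬ sInf {n | ψ p n ≠ ψ (α g p) n} < k + 1 := by
          intro hlt
          have hmem := Nat.sInf_mem (⟨k + 1, h1⟩ :
            Set.Nonempty {n | ψ p n ≠ ψ (α g p) n})
          exact hmem (h2 _ (by omega))
        rw [nDiff]
        omega
    rw [hset]
    exact ((meas_D hψm hα g (k + 1)).compl).inter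
      (MeasurableSet.iInter fun n => MeasurableSet.iInter fun _ =>
        meas_D hψm hα g n)

lemma meas_foldr (hψm : Measurable ψ) (hα : ∀ γ, Measurable (α γ)) :
    ∀ l : List Γ,
      Measurable fun p : X => l.foldr (fun g m => max (nDiff α ψ g p) m) 0 := by
  intro l
  induction l with
  | nil => exact measurable_const
  | cons a t ih =>
    have h : Measurable fun p : X =>
        (nDiff α ψ a p, t.foldr (fun g m => max (nDiff α ψ g p) m) 0) :=
      (meas_nDiff hψm hα a).prodMk ih
    exact meas_comp (fun x : ℕ × ℕ => max x.1 x.2) h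

lemma meas_Nmax (hψm : Measurable ψ) (hα : ∀ γ, Measurable (α γ)) (r : ℕ) :
    Measurable (Nmax α σ ψ r) :=
  meas_foldr hψm hα (Wsym σ r)

lemma meas_pf (hψm : Measurable ψ) : ∀ m, Measurable fun p : X => pf ψ p m := by
  intro m
  induction m with
  | zero => simp only [pf, Finset.range_zero, Finset.sum_empty]; exact measurable_const
  | succ m ih =>
    have h : Measurable fun p : X => (pf ψ p m, ψ p m) :=
      ih.prodMk ((measurable_pi_apply m).comp hψm)
    have h2 := meas_comp
      (fun x : ℕ × Bool => x.1 + (if x.2 then 2 ^ m else 0)) h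
    simp only [pf_succ]
    exact h2

lemma meas_c0 (hψm : Measurable ψ) (hα : ∀ γ, Measurable (α γ)) (r : ℕ) :
    Measurable (c0 α σ ψ r) := by
  have hv : ∀ n, Measurable fun p : X => Nat.pair (Nmax α σ ψ r p) (pf ψ p n) :=
    fun n => meas_comp (fun x : ℕ × ℕ => Nat.pair x.1 x.2)
      ((meas_Nmax hψm hα r).prodMk (meas_pf hψm n))
  have hu : Measurable fun p : X => Nmax α σ ψ r p + 1 :=
    meas_comp (fun x : ℕ => x + 1) (meas_Nmax hψm hα r)
  exact meas_diag hv hu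

lemma meas_greedy (hψm : Measurable ψ) (hα : ∀ γ, Measurable (α γ)) (r : ℕ) :
    ∀ n, Measurable (greedy α σ ψ r n) := by
  intro n
  induction n with
  | zero => exact measurable_const
  | succ n ih =>
    set m := (Wsym σ r).length with hm
    set T : X → ℕ × (Fin m → ℕ × ℕ) := fun p =>
      (c0 α σ ψ r p, fun i =>
        (c0 α σ ψ r (α ((Wsym σ r).get i) p), greedy α σ ψ r n (α ((Wsym σ r).get i) p)))
      with hT
    have hTm : Measurable T := by
      refine (meas_c0 hψm hα r).prodMk (measurable_pi_lambda _ fun i => ?_)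
      exact ((meas_c0 hψm hα r).comp (hα _)).prodMk (ih.comp (hα _))
    set G : ℕ × (Fin m → ℕ × ℕ) → ℕ := fun x =>
      Nat.find (exists_not_mem (((List.finRange m).filter
        (fun i => decide ((x.2 i).1 < x.1))).map (fun i => (x.2 i).2))) with hG
    have heq : greedy α σ ψ r (n + 1) = fun p => G (T p) := by
      funext p
      simp only [greedy]
      rfl
    rw [heq]
    exact meas_comp G hTm

lemma meas_colr (hψm : Measurable ψ) (hα : ∀ γ, Measurable (α γ)) (r : ℕ) :
    Measurable (colr α σ ψ r) := by
  have hu : Measurable fun p : X => c0 α σ ψ r p + 1 :=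
    meas_comp (fun x : ℕ => x + 1) (meas_c0 hψm hα r)
  exact meas_diag (v := fun p n => greedy α σ ψ r n p)
    (fun n => meas_greedy hψm hα r n) hu

end Stmt3Aux


open Stmt3Aux in
/-- Existence of a separating, proper Cantor coloring for any Borel action of a
countably infinite group on a standard Borel space. -/
theorem stmt3 {Γ X : Type} [Group Γ] [Countable Γ] [Infinite Γ]
    [MeasurableSpace X] [StandardBorelSpace X]
    (σ : ℕ → Γ)
    (hgen : Subgroup.closure {g : Γ | ∃ i, 1 ≤ i ∧ g = σ i} = ⊤)
    (α : Γ →* Equiv.Perm X)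
    (hα : ∀ γ, Measurable (α γ)) :
    ∃ φ : X → ℕ → Bool, Measurable φ ∧ Function.Injective φ ∧
      ∀ r > 0, ∃ S > 0, ∀ p q : X, p ≠ q → graphDistLE α σ r p q →
        ∃ k < S, φ p k ≠ φ q k := by
  obtain ⟨ψ, hψm, hψi⟩ :=
    MeasurableSpace.measurable_injection_nat_bool_of_countablySeparated X
  refine ⟨fun p k => if (Nat.unpair k).1 = 0 then ψ p (Nat.unpair k).2
    else Nat.testBit (colr α σ ψ (Nat.unpair k).1 p) (Nat.unpair k).2, ?_, ?_, ?_⟩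
  · apply measurable_pi_lambda
    intro k
    by_cases h : (Nat.unpair k).1 = 0
    · simp only [h, if_true]
      exact (measurable_pi_apply _).comp hψm
    · simp only [h, if_false]
      exact meas_comp (fun c : ℕ => Nat.testBit c (Nat.unpair k).2)
        (meas_colr hψm hα _)
  · intro p q h
    apply hψi
    funext j
    have hh := congrFun h (Nat.pair 0 j)
    simpa [Nat.unpair_pair] using hh
  · intro r hr
    set t := (Wsym σ r).length + 1 with ht
    refine ⟨(Finset.range t).sup (fun j => Nat.pair r j) + 1, Nat.succ_pos _, ?_⟩
    intro p q hpq hdist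
    obtain ⟨g, hg, hgp⟩ := exists_word α σ hdist
    have hne : α g p ≠ p := by rw [hgp]; exact fun hh => hpq hh.symm
    have hcol : colr α σ ψ r p ≠ colr α σ ψ r q := by
      have h2 := colr_proper α σ hψi hg hne
      rwa [hgp] at h2
    have hpow : ∀ x : X, colr α σ ψ r x < 2 ^ t := by
      intro x
      have h1 := colr_le α σ ψ r x
      have h2 := Nat.lt_two_pow_self (n := (Wsym σ r).length)
      have h3 : (2:ℕ) ^ (Wsym σ r).length ≤ 2 ^ t :=
        Nat.pow_le_pow_right (by norm_num) (by omega)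
      omega
    obtain ⟨j, hjt, hbit⟩ : ∃ j < t,
        Nat.testBit (colr α σ ψ r p) j ≠ Nat.testBit (colr α σ ψ r q) j := by
      by_contra hcon
      push_neg at hcon
      apply hcol
      apply Nat.eq_of_testBit_eq
      intro i
      by_cases hi : i < t
      · exact hcon i hi
      · rw [Nat.testBit_eq_false_of_lt, Nat.testBit_eq_false_of_lt]
        · exact lt_of_lt_of_le (hpow q)
            (Nat.pow_le_pow_right (by norm_num) (by omega))
        · exact lt_of_lt_of_le (hpow p)
            (Nat.pow_le_pow_right (by norm_num) (by omega))
    refine ⟨Nat.pair r j, ?_, ?_⟩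
    · have hle : Nat.pair r j ≤ (Finset.range t).sup (fun j => Nat.pair r j) :=
        Finset.le_sup (Finset.mem_range.mpr hjt)
      omega
    · simp only [Nat.unpair_pair]
      rw [if_neg (by omega : ¬ r = 0), if_neg (by omega : ¬ r = 0)]
      exact hbit
end

section
/- Let Γ be a countably infinite group with generators (σ_i) and subgroups Γ_n = ⟨σ_1,…,σ_n⟩, let α : Γ ↷ X be a free Borel action on a standard Borel space, and let φ : X → C be a separating, proper C-coloring with respect to α. Define Θ(x)(γ) = φ(α(γ)(x)) ∈ C^Γ. Then the closure of Θ(X) in C^Γ (product topology) is contained in the free part Free(C^Γ): every ρ in the closure satisfies L_γ(ρ) ≠ ρ for all γ ≠ e. -/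
section Aux

variable {Γ X : Type} [Group Γ] (α : Γ →* Equiv.Perm X) (σ : ℕ → Γ)

/-- Paths of length at most `n` in the graph `G_r`. -/
def pathLE (n r : ℕ) (p q : X) : Prop :=
  ∃ k ≤ n, ∃ f : ℕ → X, f 0 = p ∧ f k = q ∧
    ∀ j < k, graphEdge α σ r (f j) (f (j + 1))

lemma graphEdge_mono {r r' : ℕ} (h : r ≤ r') {p q : X}
    (he : graphEdge α σ r p q) : graphEdge α σ r' p q := by
  obtain ⟨hne, i, h1, h2, h3⟩ := he
  exact ⟨hne, i, h1, h2.trans h, h3⟩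

lemma graphEdge_symm {r : ℕ} {p q : X}
    (he : graphEdge α σ r p q) : graphEdge α σ r q p := by
  obtain ⟨hne, i, h1, h2, h3⟩ := he
  exact ⟨hne.symm, i, h1, h2, h3.symm⟩

lemma pathLE_mono {n n' r r' : ℕ} (hn : n ≤ n') (hr : r ≤ r') {p q : X}
    (h : pathLE α σ n r p q) : pathLE α σ n' r' p q := by
  obtain ⟨k, hk, f, h0, hk2, he⟩ := h
  exact ⟨k, hk.trans hn, f, h0, hk2, fun j hj => graphEdge_mono α σ hr (he j hj)⟩

lemma pathLE_trans {n m r : ℕ} {p q s : X}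
    (h1 : pathLE α σ n r p q) (h2 : pathLE α σ m r q s) :
    pathLE α σ (n + m) r p s := by
  obtain ⟨k1, hk1, f1, hf10, hf1k, he1⟩ := h1
  obtain ⟨k2, hk2, f2, hf20, hf2k, he2⟩ := h2
  refine ⟨k1 + k2, Nat.add_le_add hk1 hk2,
    fun j => if j < k1 then f1 j else f2 (j - k1), ?_, ?_, ?_⟩
  · by_cases h : 0 < k1
    · simp [h, hf10]
    · have hk0 : k1 = 0 := by omega
      have : f2 0 = p := by rw [hf20, ← hf1k, hk0, hf10]
      simp [h, this]
  · have : ¬ (k1 + k2 < k1) := by omega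
    simp [this, hf2k]
  · intro j hj
    by_cases h : j < k1
    · have hgj : (if j < k1 then f1 j else f2 (j - k1)) = f1 j := by simp [h]
      have hgj1 : (if j + 1 < k1 then f1 (j+1) else f2 (j + 1 - k1)) = f1 (j + 1) := by
        by_cases h' : j + 1 < k1
        · simp [h']
        · have : j + 1 = k1 := by omega
          simp [h', this, hf20, ← hf1k]
      simp only [hgj, hgj1]
      exact he1 j h
    · have hgj : (if j < k1 then f1 j else f2 (j - k1)) = f2 (j - k1) := by simp [h]
      have h' : ¬ (j + 1 < k1) := by omega
      have hgj1 : (if j + 1 < k1 then f1 (j+1) else f2 (j + 1 - k1)) = f2 (j - k1 + 1) := by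
        simp [h']; congr 1; omega
      simp only [hgj, hgj1]
      exact he2 (j - k1) (by omega)

lemma pathLE_symm {n r : ℕ} {p q : X}
    (h : pathLE α σ n r p q) : pathLE α σ n r q p := by
  obtain ⟨k, hk, f, h0, hk2, he⟩ := h
  refine ⟨k, hk, fun j => f (k - j), by simp [hk2], by simp [h0], ?_⟩
  intro j hj
  show graphEdge α σ r (f (k - j)) (f (k - (j + 1)))
  have h1 : k - j = (k - (j + 1)) + 1 := by omega
  rw [h1]
  exact graphEdge_symm α σ (he (k - (j + 1)) (by omega))

end Aux

/-- For a free Borel action `α` with a separating, proper Cantor coloring `φ`,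
the closure of the image of `Θ(x)(γ) = φ(α(γ)x)` in `C^Γ` is contained in the
free part of the Bernoulli shift. -/
theorem stmt6 {Γ X : Type} [Group Γ] [Countable Γ] [Infinite Γ]
    [MeasurableSpace X] [StandardBorelSpace X]
    (σ : ℕ → Γ)
    (hgen : Subgroup.closure {g : Γ | ∃ i, 1 ≤ i ∧ g = σ i} = ⊤)
    (α : Γ →* Equiv.Perm X) (hα : ∀ γ, Measurable (α γ))
    (hfree : ∀ γ : Γ, γ ≠ 1 → ∀ x : X, α γ x ≠ x)
    (φ : X → ℕ → Bool) (hφm : Measurable φ) (hφi : Function.Injective φ)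
    (hproper : ∀ r > 0, ∃ S > 0, ∀ p q : X, p ≠ q → graphDistLE α σ r p q →
      ∃ k < S, φ p k ≠ φ q k)
    (Θ : X → Γ → ℕ → Bool)
    (hΘ : ∀ x γ, Θ x γ = φ (α γ x)) :
    ∀ ρ ∈ closure (Set.range Θ), ∀ γ : Γ, γ ≠ 1 →
      (fun g => ρ (g * γ)) ≠ ρ := by
  -- Step 1: every group element moves points a bounded distance in some G_r.
  have key : ∀ g : Γ, ∃ r, 1 ≤ r ∧ ∀ x : X, pathLE α σ r r (α g x) x := by
    intro g
    have hg : g ∈ Subgroup.closure {g : Γ | ∃ i, 1 ≤ i ∧ g = σ i} := by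
      rw [hgen]; trivial
    induction hg using Subgroup.closure_induction with
    | mem x hx =>
      obtain ⟨i, hi1, rfl⟩ := hx
      refine ⟨i, hi1, fun x => ?_⟩
      by_cases h : α (σ i) x = x
      · exact ⟨0, Nat.zero_le _, fun _ => x, h.symm, rfl, by omega⟩
      · refine ⟨1, hi1, fun j => if j = 0 then α (σ i) x else x, by simp, by simp, ?_⟩
        intro j hj
        have : j = 0 := by omega
        subst this
        exact ⟨by simpa using h, i, hi1, le_refl i, Or.inr (by simp)⟩
    | one =>
      refine ⟨1, le_refl 1, fun x => ⟨0, Nat.zero_le _, fun _ => x, by simp, rfl, by omega⟩⟩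
    | mul g h _ _ ihg ihh =>
      obtain ⟨rg, hrg, hg'⟩ := ihg
      obtain ⟨rh, hrh, hh'⟩ := ihh
      refine ⟨rg + rh, by omega, fun x => ?_⟩
      have p1 : pathLE α σ rg (rg + rh) (α g (α h x)) (α h x) :=
        pathLE_mono α σ (le_refl _) (Nat.le_add_right _ _) (hg' (α h x))
      have p2 : pathLE α σ rh (rg + rh) (α h x) x :=
        pathLE_mono α σ (le_refl _) (Nat.le_add_left _ _) (hh' x)
      have := pathLE_trans α σ p1 p2
      simpa [map_mul] using this
    | inv g _ ihg =>
      obtain ⟨r, hr, hg'⟩ := ihg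
      refine ⟨r, hr, fun x => ?_⟩
      have := pathLE_symm α σ (hg' (α g⁻¹ x))
      have h2 : α g (α g⁻¹ x) = x := by
        rw [← Equiv.Perm.mul_apply, ← map_mul]; simp
      rw [h2] at this
      exact this
  intro ρ hρ γ hγ
  obtain ⟨r, hr1, hpath⟩ := key γ
  obtain ⟨S, hS, hsep⟩ := hproper r hr1
  -- the closed separating set
  set T : Set (Γ → ℕ → Bool) := ⋃ k ∈ Finset.range S, {ρ | ρ γ k ≠ ρ 1 k} with hT
  have hTclosed : IsClosed T := by
    refine Set.Finite.isClosed_biUnion (Finset.range S).finite_toSet fun k _ => ?_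
    have hc : Continuous (fun ρ : Γ → ℕ → Bool => ((ρ γ k, ρ 1 k) : Bool × Bool)) :=
      Continuous.prodMk ((continuous_apply k).comp (continuous_apply γ))
        ((continuous_apply k).comp (continuous_apply 1))
    have : {ρ : Γ → ℕ → Bool | ρ γ k ≠ ρ 1 k}
        = (fun ρ : Γ → ℕ → Bool => ((ρ γ k, ρ 1 k) : Bool × Bool)) ⁻¹' {p | p.1 ≠ p.2} :=
      rfl
    rw [this]
    exact (isClosed_discrete _).preimage hc
  have hsub : Set.range Θ ⊆ T := by
    rintro _ ⟨x, rfl⟩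
    have hne : α γ x ≠ x := hfree γ hγ x
    obtain ⟨k, hkS, hk⟩ := hsep (α γ x) x hne (hpath x)
    refine Set.mem_biUnion (Finset.mem_range.mpr hkS) ?_
    simp only [Set.mem_setOf_eq, hΘ, map_one]
    simpa using hk
  have hρT : ρ ∈ T := closure_minimal hsub hTclosed hρ
  obtain ⟨k, hkS, hk⟩ := by
    simpa [hT, Set.mem_iUnion] using hρT
  intro heq
  have := congrFun (congrFun heq 1) k
  simp only [one_mul] at this
  exact hk this
end

section
/- Let Γ be a countable group, Z ⊆ Sub(Γ) a conjugation-invariant set of subgroups, α : Γ ↷ X a Borel (Γ,Z)-action (i.e., Stab_α(x) ∈ Z for every x), and φ : X → C an injective Borel map. Define Θ(x) ∈ F(H), H = Stab_α(x), by Θ(x)(Hγ) = φ(α(γ)(x)). Then Θ : X → C^Z is well-defined (independent of the coset representative), injective, and Γ-equivariant: Θ(α(δ)(x)) = L_δ(Θ(x)) for all δ, x. -/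
def conjSub {Γ : Type} [Group Γ] (δ : Γ) (H : Subgroup Γ) : Subgroup Γ :=
  Subgroup.map (MulAut.conj δ).toMonoidHom H

/-- `ρ ∈ F(H)`: a map on right cosets `Γ/H`, represented by a function on `Γ`
constant on each right coset `Hγ`. -/
def cosetMap {Γ : Type} [Group Γ] (H : Subgroup Γ) (ρ : Γ → ℕ → Bool) : Prop :=
  ∀ h ∈ H, ∀ γ, ρ (h * γ) = ρ γ

/-- The Bernoulli shift on `C^Z`. -/
def shiftC {Γ : Type} [Group Γ] (δ : Γ) (ρ : Γ → ℕ → Bool) : Γ → ℕ → Bool :=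
  fun γ => ρ (δ⁻¹ * γ)

/-- The stabilizer subgroup of a point. -/
def stabSub {Γ X : Type} [Group Γ] (α : Γ →* Equiv.Perm X) (x : X) :
    Subgroup Γ where
  carrier := {γ | α γ x = x}
  one_mem' := by simp
  mul_mem' := by
    intro a b ha hb
    simp only [Set.mem_setOf_eq, map_mul, Equiv.Perm.mul_apply] at *
    rw [hb, ha]
  inv_mem' := by
    intro a ha
    simp only [Set.mem_setOf_eq] at *
    conv_lhs => rw [← ha]
    simp

/-- For a Borel `(Γ,Z)`-action `α` and an injective Borel map `φ : X → C`, the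
map `Θ(x) ∈ F(Stab_α(x))`, assigning to the right coset `Stab_α(x)·γ` the
value `φ` of the corresponding point of the orbit of `x`, is a well-defined,
injective, `Γ`-equivariant Borel map `X → C^Z`. -/
theorem stmt13 {Γ X : Type} [Group Γ] [Countable Γ]
    [MeasurableSpace X] [StandardBorelSpace X]
    (Z : Set (Subgroup Γ)) (hZ : ∀ (δ : Γ), ∀ K ∈ Z, conjSub δ K ∈ Z)
    (α : Γ →* Equiv.Perm X) (hα : ∀ γ, Measurable (α γ))
    (hstab : ∀ x : X, stabSub α x ∈ Z)
    (φ : X → ℕ → Bool) (hφm : Measurable φ) (hφi : Function.Injective φ)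
    (Θ : X → Γ → ℕ → Bool)
    (hΘ : ∀ (x : X) (γ : Γ), Θ x γ = φ (α γ⁻¹ x)) :
    (∀ x : X, cosetMap (stabSub α x) (Θ x)) ∧
      Measurable Θ ∧ Function.Injective Θ ∧
      (∀ (δ : Γ) (x : X),
        stabSub α (α δ x) = conjSub δ (stabSub α x) ∧
        Θ (α δ x) = shiftC δ (Θ x)) := by
  refine ⟨?_, ?_, ?_, ?_⟩
  · intro x h hh γ
    have hi : α h⁻¹ x = x := (stabSub α x).inv_mem hh
    rw [hΘ, hΘ, mul_inv_rev, map_mul, Equiv.Perm.mul_apply, hi]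
  · apply measurable_pi_lambda
    intro γ
    have : (fun x => Θ x γ) = fun x => φ (α γ⁻¹ x) := funext fun x => hΘ x γ
    rw [this]
    exact hφm.comp (hα γ⁻¹)
  · intro x y hxy
    have h1 : Θ x 1 = Θ y 1 := by rw [hxy]
    rw [hΘ, hΘ] at h1
    simpa using hφi h1
  · intro δ x
    constructor
    · ext γ
      constructor
      · intro hγ
        refine ⟨δ⁻¹ * γ * δ, ?_, by simp [MulAut.conj_apply]; group⟩
        show α (δ⁻¹ * γ * δ) x = x
        have : α γ (α δ x) = α δ x := hγ
        simp only [map_mul, Equiv.Perm.mul_apply]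
        rw [this]
        simp [← Equiv.Perm.mul_apply, ← map_mul]
      · rintro ⟨h, hh, rfl⟩
        have : α h x = x := hh
        show α (MulAut.conj δ h) (α δ x) = α δ x
        simp only [MulAut.conj_apply, map_mul, Equiv.Perm.mul_apply]
        rw [show (α δ⁻¹) (α δ x) = x by simp [← Equiv.Perm.mul_apply, ← map_mul], this]
    · funext γ
      rw [hΘ, shiftC, hΘ]
      rw [show (α γ⁻¹) ((α δ) x) = α (γ⁻¹ * δ) x by simp [map_mul]]
      congr 1
      group
end

section
/- Let Γ be a countable group, Z ⊆ Sub(Γ) a closed conjugation-invariant set, α : Γ ↷ X a Borel (Γ,Z)-action, and φ : X → C a separating, proper C-coloring with respect to α. Let Θ(x) ∈ F(Stab_α(x)) be defined by Θ(x)(Hγ) = φ(α(γ)(x)). Then the closure of Θ(X) in C^Z (with the metric d described by: ρ_k → ρ means Stab groups converge in Sub(Γ) and values converge coset-wise) is contained in Free(C^Z): if Θ(x_n) → ρ ∈ F(H) and δ ∉ H, then ρ(H) ≠ ρ(Hδ), hence L_δ(ρ) ≠ ρ. -/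
lemma gd_mono {Γ X : Type} [Group Γ] (α : Γ →* Equiv.Perm X) (σ : ℕ → Γ)
    {r r' : ℕ} {p q : X} (h : r ≤ r') (hd : graphDistLE α σ r p q) :
    graphDistLE α σ r' p q := by
  obtain ⟨k, hk, f, h0, hk', he⟩ := hd
  exact ⟨k, hk.trans h, f, h0, hk', fun j hj =>
    let ⟨hne, i, h1, h2, h3⟩ := he j hj; ⟨hne, i, h1, h2.trans h, h3⟩⟩

lemma gd_refl {Γ X : Type} [Group Γ] (α : Γ →* Equiv.Perm X) (σ : ℕ → Γ)
    (r : ℕ) (p : X) : graphDistLE α σ r p p :=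
  ⟨0, Nat.zero_le _, fun _ => p, rfl, rfl, fun j hj => absurd hj (by omega)⟩

lemma gd_symm {Γ X : Type} [Group Γ] (α : Γ →* Equiv.Perm X) (σ : ℕ → Γ)
    {r : ℕ} {p q : X} (hd : graphDistLE α σ r p q) : graphDistLE α σ r q p := by
  obtain ⟨k, hk, f, h0, hk', he⟩ := hd
  refine ⟨k, hk, fun j => f (k - j), by simpa, by simpa, fun j hj => ?_⟩
  have hj' : k - j - 1 < k := by omega
  obtain ⟨hne, i, h1, h2, h3⟩ := he (k - j - 1) hj'
  have e1 : k - j - 1 + 1 = k - j := by omega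
  have e2 : k - (j + 1) = k - j - 1 := by omega
  rw [e1] at hne h3
  show graphEdge α σ r (f (k - j)) (f (k - (j + 1)))
  rw [e2]
  exact ⟨fun h => hne h.symm, i, h1, h2, h3.symm⟩

lemma gd_trans {Γ X : Type} [Group Γ] (α : Γ →* Equiv.Perm X) (σ : ℕ → Γ)
    {r₁ r₂ : ℕ} {p q s : X} (hd₁ : graphDistLE α σ r₁ p q)
    (hd₂ : graphDistLE α σ r₂ q s) : graphDistLE α σ (r₁ + r₂) p s := by
  obtain ⟨k₁, hk₁, f₁, h01, hk1', he₁⟩ := hd₁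
  obtain ⟨k₂, hk₂, f₂, h02, hk2', he₂⟩ := hd₂
  refine ⟨k₁ + k₂, by omega, fun j => if j < k₁ then f₁ j else f₂ (j - k₁),
    ?_, ?_, ?_⟩
  · by_cases h : 0 < k₁
    · simp [h, h01]
    · have : k₁ = 0 := by omega
      simp [this, h02, ← h01, this ▸ hk1']
  · have h : ¬ (k₁ + k₂ < k₁) := by omega
    simp only [h, if_false]
    simpa using hk2'
  · intro j hj
    by_cases h1 : j + 1 < k₁
    · have h2 : j < k₁ := by omega
      simp only [h1, h2, if_true]
      obtain ⟨hne, i, ha, hb, hc⟩ := he₁ j (by omega)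
      exact ⟨hne, i, ha, by omega, hc⟩
    · by_cases h2 : j < k₁
      · have e : j + 1 = k₁ := by omega
        simp only [if_pos h2, if_neg h1]
        rw [show j + 1 - k₁ = 0 from by omega, h02, ← hk1']
        obtain ⟨hne, i, ha, hb, hc⟩ := he₁ j (by omega)
        rw [e] at hne hc
        exact ⟨hne, i, ha, by omega, hc⟩
      · have h3 : ¬ (j + 1 < k₁) := h1
        simp only [h2, h3, if_false]
        have e : j + 1 - k₁ = j - k₁ + 1 := by omega
        rw [e]
        obtain ⟨hne, i, ha, hb, hc⟩ := he₂ (j - k₁) (by omega)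
        exact ⟨hne, i, ha, by omega, hc⟩

lemma gd_reach {Γ X : Type} [Group Γ] (α : Γ →* Equiv.Perm X) (σ : ℕ → Γ)
    (hgen : Subgroup.closure {g : Γ | ∃ i, 1 ≤ i ∧ g = σ i} = ⊤)
    (γ : Γ) : ∃ r, 1 ≤ r ∧ ∀ p : X, graphDistLE α σ r p (α γ p) := by
  have hγ : γ ∈ Subgroup.closure {g : Γ | ∃ i, 1 ≤ i ∧ g = σ i} := by
    rw [hgen]; trivial
  induction hγ using Subgroup.closure_induction with
  | mem g hg =>
    obtain ⟨i, hi, rfl⟩ := hg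
    refine ⟨i, hi, fun p => ?_⟩
    by_cases h : α (σ i) p = p
    · rw [h]; exact gd_refl α σ i p
    · exact ⟨1, hi, fun j => if j = 0 then p else α (σ i) p, by simp, by simp,
        fun j hj => by
          have : j = 0 := by omega
          subst this
          exact ⟨fun he => h he.symm, i, le_refl 1 |>.trans hi, le_refl i,
            Or.inl rfl⟩⟩
  | one => exact ⟨1, le_refl 1, fun p => by simpa using gd_refl α σ 1 p⟩
  | mul a b _ _ iha ihb =>
    obtain ⟨r₁, hr₁, h₁⟩ := iha
    obtain ⟨r₂, hr₂, h₂⟩ := ihb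
    refine ⟨r₁ + r₂, by omega, fun p => ?_⟩
    have : α (a * b) p = α a (α b p) := by simp [map_mul]
    rw [this]
    exact gd_mono α σ (by omega) (gd_trans α σ (h₂ p) (h₁ (α b p)))
  | inv a _ ih =>
    obtain ⟨r, hr, h⟩ := ih
    refine ⟨r, hr, fun p => ?_⟩
    have := gd_symm α σ (h (α a⁻¹ p))
    have e : α a (α a⁻¹ p) = p := by
      rw [← Equiv.Perm.mul_apply, ← map_mul]; simp
    rwa [e] at this

/-- For a Borel `(Γ,Z)`-action `α` with a separating, proper Cantor coloring
`φ`, the closure of the image of `Θ` in `C^Z` lies in the free part: if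
`Θ(x_n) → ρ ∈ F(H)` (stabilizers converging in `Sub(Γ)`, values converging
coset-wise) and `δ ∉ H`, then `ρ(H) ≠ ρ(Hδ)`, hence `L_δ(ρ) ≠ ρ`. -/
theorem stmt15 {Γ X : Type} [Group Γ] [Countable Γ]
    [MeasurableSpace X] [StandardBorelSpace X]
    (σ : ℕ → Γ)
    (hgen : Subgroup.closure {g : Γ | ∃ i, 1 ≤ i ∧ g = σ i} = ⊤)
    (Z : Set (Subgroup Γ)) (hZ : ∀ (δ : Γ), ∀ K ∈ Z, conjSub δ K ∈ Z)
    (α : Γ →* Equiv.Perm X) (hα : ∀ γ, Measurable (α γ))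
    (hstab : ∀ x : X, stabSub α x ∈ Z)
    (φ : X → ℕ → Bool) (hφm : Measurable φ) (hφi : Function.Injective φ)
    (hproper : ∀ r > 0, ∃ S > 0, ∀ p q : X, p ≠ q → graphDistLE α σ r p q →
      ∃ k < S, φ p k ≠ φ q k)
    (Θ : X → Γ → ℕ → Bool)
    (hΘ : ∀ (x : X) (γ : Γ), Θ x γ = φ (α γ⁻¹ x))
    (x : ℕ → X) (H : Subgroup Γ) (hHZ : H ∈ Z)
    (ρ : Γ → ℕ → Bool) (hρ : cosetMap H ρ)
    (hstabconv : ∀ γ : Γ, ∃ N, ∀ n ≥ N, (γ ∈ stabSub α (x n) ↔ γ ∈ H))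
    (hvalconv : ∀ (γ : Γ) (m : ℕ), ∃ N, ∀ n ≥ N, ∀ k < m, Θ (x n) γ k = ρ γ k) :
    ∀ δ : Γ, δ ∉ H → ρ δ ≠ ρ 1 ∧ ¬(conjSub δ H = H ∧ shiftC δ ρ = ρ) := by
  intro δ hδ
  have main : ρ δ ≠ ρ 1 := by
    obtain ⟨r, hr, hreach⟩ := gd_reach α σ hgen (δ⁻¹ : Γ) (X := X)
    obtain ⟨S, hS, hprop⟩ := hproper r hr
    obtain ⟨N₁, hN₁⟩ := hstabconv δ
    obtain ⟨N₂, hN₂⟩ := hvalconv δ (S + 1)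
    obtain ⟨N₃, hN₃⟩ := hvalconv 1 (S + 1)
    set n := max N₁ (max N₂ N₃) with hn
    have hd : δ ∉ stabSub α (x n) := by
      rw [hN₁ n (le_max_left _ _)]; exact hδ
    have hne : α δ⁻¹ (x n) ≠ x n := by
      intro h
      exact hd ((stabSub α (x n)).inv_mem_iff.mp (h : δ⁻¹ ∈ stabSub α (x n)))
    obtain ⟨k, hk, hkk⟩ := hprop (x n) (α δ⁻¹ (x n)) (fun h => hne h.symm)
      (hreach (x n))
    intro hcontra
    apply hkk
    have e1 : φ (x n) k = ρ 1 k := by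
      have := hN₃ n (le_trans (le_max_right _ _) (le_max_right _ _)) k
        (by omega)
      rw [← this, hΘ]; simp
    have e2 : φ (α δ⁻¹ (x n)) k = ρ δ k := by
      have := hN₂ n (le_trans (le_max_left _ _) (le_max_right _ _)) k
        (by omega)
      rw [← this, hΘ]
    rw [e1, e2, hcontra]
  refine ⟨main, fun ⟨_, hshift⟩ => main ?_⟩
  have : shiftC δ ρ δ = ρ δ := by rw [hshift]
  rw [shiftC] at this
  simpa using this.symm
end
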